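/- Assume moreover ∫_{(0,1)} ℓ π(dℓ) = ∞. Let φ : [0,∞) → [0,∞) satisfy ψ(φ(x)) = x and φ(ψ(x)) = x for all x ≥ 0, and let π_* be a σ-finite measure on (0,∞) such that φ(λ) = ∫_{(0,∞)} (1 − e^{−λr}) π_*(dr) for every λ > 0. Then lim_{ε→0+} π_*((ε,∞)) = ∞ and lim_{ε→0+} (1/ε) ∫_{(0,ε)} r π_*(dr) = ∞. -/
import Mathlib

open MeasureTheory Set Filter Topology

lemma aux_one_sub_exp_le (t : ℝ) : 1 - Real.exp (-t) ≤ t := by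
  have := Real.add_one_le_exp (-t); linarith

lemma aux_one_sub_exp_lt {t : ℝ} (ht : 0 < t) : 1 - Real.exp (-t) < t := by
  have := Real.add_one_lt_exp (x := -t) (by linarith); linarith

lemma aux_exp_diff_le {a b : ℝ} (h : a ≤ b) :
    Real.exp (-a) - Real.exp (-b) ≤ (b - a) * Real.exp (-a) := by
  have h1 : Real.exp (-b) = Real.exp (-a) * Real.exp (-(b-a)) := by
    rw [← Real.exp_add]; ring_nf
  have h2 : 1 - Real.exp (-(b-a)) ≤ b - a := aux_one_sub_exp_le _
  have h3 : (0:ℝ) < Real.exp (-a) := Real.exp_pos _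
  calc Real.exp (-a) - Real.exp (-b) = Real.exp (-a) * (1 - Real.exp (-(b-a))) := by
        rw [h1]; ring
    _ ≤ Real.exp (-a) * (b - a) := by
        exact mul_le_mul_of_nonneg_left h2 h3.le
    _ = (b - a) * Real.exp (-a) := by ring

lemma aux_exp_diff_ge {a b : ℝ} (h : a ≤ b) :
    (b - a) * Real.exp (-b) ≤ Real.exp (-a) - Real.exp (-b) := by
  have h1 : Real.exp (-a) = Real.exp (-b) * Real.exp (b-a) := by
    rw [← Real.exp_add]; ring_nf
  have h2 : (b - a) + 1 ≤ Real.exp (b-a) := Real.add_one_le_exp _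
  have h3 : (0:ℝ) < Real.exp (-b) := Real.exp_pos _
  calc (b - a) * Real.exp (-b) = Real.exp (-b) * (b - a) := by ring
    _ ≤ Real.exp (-b) * (Real.exp (b - a) - 1) := by
        exact mul_le_mul_of_nonneg_left (by linarith) h3.le
    _ = Real.exp (-a) - Real.exp (-b) := by rw [h1]; ring

lemma aux_exp_quad {t : ℝ} (ht : 0 ≤ t) : Real.exp (-t) - 1 + t ≤ t^2 := by
  have h0 : (0:ℝ) < 1 + t := by linarith
  have h1 : Real.exp (-t) * (1 + t) ≤ 1 := by
    have h2 : Real.exp (-t) * (1 + t) ≤ Real.exp (-t) * Real.exp t :=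
      mul_le_mul_of_nonneg_left (by linarith [Real.add_one_le_exp t]) (Real.exp_pos _).le
    simpa [← Real.exp_add] using h2
  nlinarith [pow_nonneg ht 3, Real.exp_pos (-t)]

lemma aux_two_scale {t : ℝ} : 1 - Real.exp (-(2*t)) ≤ 2 * (1 - Real.exp (-t)) := by
  have h : Real.exp (-(2*t)) = Real.exp (-t) ^ 2 := by
    rw [← Real.exp_nat_mul]; ring_nf
  nlinarith [sq_nonneg (1 - Real.exp (-t))]
lemma aux_mul_exp (t : ℝ) : t * Real.exp (-t) ≤ 1 - Real.exp (-t) := by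
  have h := mul_le_mul_of_nonneg_left (Real.add_one_le_exp t) (Real.exp_pos (-t)).le
  rw [← Real.exp_add] at h
  simp only [neg_add_cancel, Real.exp_zero] at h
  nlinarith [Real.exp_pos (-t)]

lemma aux_tail {a E : ℝ} (hE : 0 < E) (hEa : E ≤ a) (ha : a < 1) :
    E^2 - E^4 ≤ a/(1-a) * (E - E^2) := by
  have hd : 0 < 1 - a := by linarith
  rw [div_mul_eq_mul_div, le_div_iff₀ hd]
  have ha0 : 0 < a := lt_of_lt_of_le hE hEa
  have h1 : E^2 ≤ a*E := by nlinarith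
  have h2 : (0:ℝ) ≤ E^4 := by positivity
  have h3 : a*E^2 ≤ a^2*E := by nlinarith
  have h4 : E^2*(1-a) ≤ (a*E)*(1-a) := mul_le_mul_of_nonneg_right h1 hd.le
  nlinarith [mul_nonneg h2 hd.le]

set_option maxHeartbeats 2000000 in
theorem stmt_12 (π : Measure ℝ) [SigmaFinite π] (α₀ : ℝ) (hα₀ : 0 ≤ α₀)
    (hπint : ∫⁻ x in Ioi (0:ℝ), ENNReal.ofReal (min x (x ^ 2)) ∂π < ⊤)
    (hπinf : ∫⁻ x in Ioo (0:ℝ) 1, ENNReal.ofReal x ∂π = ⊤)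
    (ψ : ℝ → ℝ)
    (hψ : ∀ l : ℝ, 0 ≤ l →
      ψ l = α₀ * l + ∫ x in Ioi (0:ℝ), (Real.exp (-(l * x)) - 1 + l * x) ∂π)
    (φ : ℝ → ℝ)
    (hφnn : ∀ x : ℝ, 0 ≤ x → 0 ≤ φ x)
    (hinv1 : ∀ x : ℝ, 0 ≤ x → ψ (φ x) = x)
    (hinv2 : ∀ x : ℝ, 0 ≤ x → φ (ψ x) = x)
    (πs : Measure ℝ) [SigmaFinite πs]
    (hπs : ∀ l : ℝ, 0 < l → φ l = ∫ r in Ioi (0:ℝ), (1 - Real.exp (-(l * r))) ∂πs) :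
    Tendsto (fun ε : ℝ => πs (Ioi ε)) (𝓝[>] 0) (𝓝 ⊤) ∧
      Tendsto (fun ε : ℝ => (1 / ε) * ∫ r in Ioo (0:ℝ) ε, r ∂πs) (𝓝[>] 0) atTop := by
  have hmin_int : IntegrableOn (fun x : ℝ => min x (x^2)) (Ioi 0) π := by
    refine ⟨(continuous_id.min (continuous_pow 2)).aestronglyMeasurable, ?_⟩
    rw [hasFiniteIntegral_iff_ofReal]
    · exact hπint
    · refine (ae_restrict_iff' measurableSet_Ioi).2 (Eventually.of_forall ?_)
      intro x hx
      have hx0 : (0:ℝ) < x := hx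
      exact le_min hx0.le (by positivity)
  obtain ⟨ψd, hψddef⟩ : ∃ f : ℝ → ℝ,
      f = fun x => α₀ + ∫ ℓ in Ioi (0:ℝ), ℓ * (1 - Real.exp (-(x*ℓ))) ∂π := ⟨_, rfl⟩
  have hI2 : ∀ x : ℝ, 0 ≤ x →
      IntegrableOn (fun ℓ => ℓ * (1 - Real.exp (-(x*ℓ)))) (Ioi 0) π := by
    intro x hx
    refine Integrable.mono (hmin_int.const_mul (1+x))
      (Continuous.aestronglyMeasurable (continuous_id.mul (continuous_const.sub
        (Real.continuous_exp.comp (continuous_const.mul continuous_id).neg)))) ?_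
    refine (ae_restrict_iff' measurableSet_Ioi).2 (Eventually.of_forall ?_)
    intro ℓ hℓ
    have hℓ0 : (0:ℝ) < ℓ := hℓ
    have ht : 0 ≤ x * ℓ := by positivity
    have he1 : Real.exp (-(x*ℓ)) ≤ 1 := Real.exp_le_one_iff.2 (by linarith)
    have he0 : 0 ≤ 1 - Real.exp (-(x*ℓ)) := by linarith
    have hle : 1 - Real.exp (-(x*ℓ)) ≤ x * ℓ := aux_one_sub_exp_le _
    have hfnn : 0 ≤ ℓ * (1 - Real.exp (-(x*ℓ))) := by positivity
    rw [Real.norm_eq_abs, Real.norm_eq_abs, abs_of_nonneg hfnn]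
    rcases le_total ℓ (ℓ^2) with hc | hc
    · rw [min_eq_left hc, abs_of_nonneg (by positivity)]
      nlinarith [mul_nonneg hx hℓ0.le, mul_pos hℓ0 (Real.exp_pos (-(x*ℓ)))]
    · rw [min_eq_right hc, abs_of_nonneg (by positivity)]
      nlinarith [mul_le_mul_of_nonneg_left hle hℓ0.le, sq_nonneg ℓ]
  have hI1 : ∀ x : ℝ, 0 ≤ x →
      IntegrableOn (fun ℓ => Real.exp (-(x*ℓ)) - 1 + x*ℓ) (Ioi 0) π := by
    intro x hx
    refine Integrable.mono (hmin_int.const_mul (x+x^2))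
      (Continuous.aestronglyMeasurable (((Real.continuous_exp.comp
        (continuous_const.mul continuous_id).neg).sub continuous_const).add
        (continuous_const.mul continuous_id))) ?_
    refine (ae_restrict_iff' measurableSet_Ioi).2 (Eventually.of_forall ?_)
    intro ℓ hℓ
    have hℓ0 : (0:ℝ) < ℓ := hℓ
    have ht : 0 ≤ x * ℓ := by positivity
    have hle : 1 - Real.exp (-(x*ℓ)) ≤ x * ℓ := aux_one_sub_exp_le _
    have he1 : Real.exp (-(x*ℓ)) ≤ 1 := Real.exp_le_one_iff.2 (by linarith)
    have hq : Real.exp (-(x*ℓ)) - 1 + x*ℓ ≤ (x*ℓ)^2 := aux_exp_quad ht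
    have hfnn : 0 ≤ Real.exp (-(x*ℓ)) - 1 + x*ℓ := by linarith
    rw [Real.norm_eq_abs, Real.norm_eq_abs, abs_of_nonneg hfnn]
    rcases le_total ℓ (ℓ^2) with hc | hc
    · rw [min_eq_left hc, abs_of_nonneg (by positivity)]
      nlinarith [mul_nonneg (mul_nonneg hx hx) hℓ0.le]
    · rw [min_eq_right hc, abs_of_nonneg (by positivity)]
      nlinarith [mul_nonneg hx (sq_nonneg ℓ)]
  have hexp_le_one : ∀ x ℓ : ℝ, 0 ≤ x → 0 ≤ ℓ → Real.exp (-(x*ℓ)) ≤ 1 := by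
    intro x ℓ hx hℓ
    exact Real.exp_le_one_iff.2 (by nlinarith)
  have hψd_nn : ∀ x : ℝ, 0 ≤ x → 0 ≤ ψd x := by
    intro x hx
    have h1 : 0 ≤ ∫ ℓ in Ioi (0:ℝ), ℓ * (1 - Real.exp (-(x*ℓ))) ∂π := by
      refine setIntegral_nonneg measurableSet_Ioi ?_
      intro ℓ hℓ
      have hℓ0 : (0:ℝ) < ℓ := hℓ
      have := hexp_le_one x ℓ hx hℓ0.le
      nlinarith
    simp only [hψddef]
    linarith
  have hψd_mono : ∀ x y : ℝ, 0 ≤ x → x ≤ y → ψd x ≤ ψd y := by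
    intro x y hx hxy
    have h1 : ∫ ℓ in Ioi (0:ℝ), ℓ * (1 - Real.exp (-(x*ℓ))) ∂π ≤
        ∫ ℓ in Ioi (0:ℝ), ℓ * (1 - Real.exp (-(y*ℓ))) ∂π := by
      refine setIntegral_mono_on (hI2 x hx) (hI2 y (hx.trans hxy)) measurableSet_Ioi ?_
      intro ℓ hℓ
      have hℓ0 : (0:ℝ) < ℓ := hℓ
      have hee : Real.exp (-(y*ℓ)) ≤ Real.exp (-(x*ℓ)) :=
        Real.exp_le_exp.2 (by nlinarith)
      nlinarith
    simp only [hψddef]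
    linarith
  have hψd_two : ∀ x : ℝ, 0 ≤ x → ψd (2*x) ≤ 2 * ψd x := by
    intro x hx
    have h1 : ∫ ℓ in Ioi (0:ℝ), ℓ * (1 - Real.exp (-(2*x*ℓ))) ∂π ≤
        ∫ ℓ in Ioi (0:ℝ), 2 * (ℓ * (1 - Real.exp (-(x*ℓ)))) ∂π := by
      refine setIntegral_mono_on (hI2 (2*x) (by linarith)) ((hI2 x hx).const_mul 2)
        measurableSet_Ioi ?_
      intro ℓ hℓ
      have hℓ0 : (0:ℝ) < ℓ := hℓ
      have h2 : 1 - Real.exp (-(2*(x*ℓ))) ≤ 2 * (1 - Real.exp (-(x*ℓ))) := aux_two_scale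
      have h3 : (-(2*(x*ℓ))) = (-(2*x*ℓ)) := by ring
      rw [h3] at h2
      nlinarith
    rw [integral_const_mul] at h1
    simp only [hψddef]
    linarith
  have hL1 : ∀ v u : ℝ, 0 ≤ v → v ≤ u → (u - v) * ψd v ≤ ψ u - ψ v := by
    intro v u hv hvu
    have hu : 0 ≤ u := hv.trans hvu
    have hsub : ∫ ℓ in Ioi (0:ℝ),
        ((Real.exp (-(u*ℓ)) - 1 + u*ℓ) - (Real.exp (-(v*ℓ)) - 1 + v*ℓ)) ∂π =
        (∫ ℓ in Ioi (0:ℝ), (Real.exp (-(u*ℓ)) - 1 + u*ℓ) ∂π) -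
        ∫ ℓ in Ioi (0:ℝ), (Real.exp (-(v*ℓ)) - 1 + v*ℓ) ∂π :=
      integral_sub (hI1 u hu) (hI1 v hv)
    have hmono : ∫ ℓ in Ioi (0:ℝ), (u - v) * (ℓ * (1 - Real.exp (-(v*ℓ)))) ∂π ≤
        ∫ ℓ in Ioi (0:ℝ),
        ((Real.exp (-(u*ℓ)) - 1 + u*ℓ) - (Real.exp (-(v*ℓ)) - 1 + v*ℓ)) ∂π := by
      refine setIntegral_mono_on ((hI2 v hv).const_mul _)
        ((hI1 u hu).sub (hI1 v hv)) measurableSet_Ioi ?_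
      intro ℓ hℓ
      have hℓ0 : (0:ℝ) < ℓ := hℓ
      have hab : v * ℓ ≤ u * ℓ := by nlinarith
      have := aux_exp_diff_le hab
      nlinarith
    rw [hsub, integral_const_mul] at hmono
    rw [hψ u hu, hψ v hv]
    simp only [hψddef]
    nlinarith [hmono]
  have hL2' : True := trivial
  have hL2 : ∀ v u : ℝ, 0 ≤ v → v ≤ u → ψ u - ψ v ≤ (u - v) * ψd u := by
    intro v u hv hvu
    have hu : 0 ≤ u := hv.trans hvu
    have hsub : ∫ ℓ in Ioi (0:ℝ),
        ((Real.exp (-(u*ℓ)) - 1 + u*ℓ) - (Real.exp (-(v*ℓ)) - 1 + v*ℓ)) ∂π =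
        (∫ ℓ in Ioi (0:ℝ), (Real.exp (-(u*ℓ)) - 1 + u*ℓ) ∂π) -
        ∫ ℓ in Ioi (0:ℝ), (Real.exp (-(v*ℓ)) - 1 + v*ℓ) ∂π :=
      integral_sub (hI1 u hu) (hI1 v hv)
    have hmono : ∫ ℓ in Ioi (0:ℝ),
        ((Real.exp (-(u*ℓ)) - 1 + u*ℓ) - (Real.exp (-(v*ℓ)) - 1 + v*ℓ)) ∂π ≤
        ∫ ℓ in Ioi (0:ℝ), (u - v) * (ℓ * (1 - Real.exp (-(u*ℓ)))) ∂π := by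
      refine setIntegral_mono_on ((hI1 u hu).sub (hI1 v hv))
        ((hI2 u hu).const_mul _) measurableSet_Ioi ?_
      intro ℓ hℓ
      have hℓ0 : (0:ℝ) < ℓ := hℓ
      have hab : v * ℓ ≤ u * ℓ := by nlinarith
      have := aux_exp_diff_ge hab
      nlinarith
    rw [hsub, integral_const_mul] at hmono
    rw [hψ u hu, hψ v hv]
    simp only [hψddef]
    nlinarith [hmono]
  have hψ0 : ψ 0 = 0 := by
    rw [hψ 0 le_rfl]; simp
  have hψmono : ∀ x y : ℝ, 0 ≤ x → x ≤ y → ψ x ≤ ψ y := by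
    intro x y hx hxy
    have h1 := hL1 x y hx hxy
    have h2 := hψd_nn x hx
    nlinarith
  have hψnn : ∀ x : ℝ, 0 ≤ x → 0 ≤ ψ x := by
    intro x hx
    have := hψmono 0 x le_rfl hx
    rw [hψ0] at this; exact this
  have hπIoo : π (Ioo (0:ℝ) 1) ≠ 0 := by
    intro h0
    rw [← Measure.restrict_eq_zero] at h0
    rw [h0] at hπinf
    simp at hπinf
  have hψstrict : ∀ x y : ℝ, 0 ≤ x → x < y → ψ x < ψ y := by
    intro x y hx hxy
    have hy : 0 ≤ y := hx.trans hxy.le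
    have hDint : IntegrableOn (fun ℓ => (Real.exp (-(y*ℓ)) - 1 + y*ℓ) -
        (Real.exp (-(x*ℓ)) - 1 + x*ℓ)) (Ioi 0) π := (hI1 y hy).sub (hI1 x hx)
    have hDpos : ∀ ℓ : ℝ, ℓ ∈ Ioi (0:ℝ) →
        0 < (Real.exp (-(y*ℓ)) - 1 + y*ℓ) - (Real.exp (-(x*ℓ)) - 1 + x*ℓ) := by
      intro ℓ hℓ
      have hℓ0 : (0:ℝ) < ℓ := hℓ
      have hey : Real.exp (-(y*ℓ)) = Real.exp (-(x*ℓ)) * Real.exp (-((y-x)*ℓ)) := by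
        rw [← Real.exp_add]; ring_nf
      have h1 : 1 - Real.exp (-((y-x)*ℓ)) < (y-x)*ℓ := aux_one_sub_exp_lt (by nlinarith)
      have h2 : Real.exp (-(x*ℓ)) ≤ 1 := hexp_le_one x ℓ hx hℓ0.le
      have h4 : Real.exp (-((y-x)*ℓ)) ≤ 1 := hexp_le_one (y-x) ℓ (by linarith) hℓ0.le
      have h5 : Real.exp (-(x*ℓ)) * (1 - Real.exp (-((y-x)*ℓ))) ≤
          1 * (1 - Real.exp (-((y-x)*ℓ))) :=
        mul_le_mul_of_nonneg_right h2 (by linarith)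
      nlinarith
    have hDnn : 0 ≤ᵐ[π.restrict (Ioi 0)] fun ℓ => (Real.exp (-(y*ℓ)) - 1 + y*ℓ) -
        (Real.exp (-(x*ℓ)) - 1 + x*ℓ) :=
      (ae_restrict_iff' measurableSet_Ioi).2
        (Eventually.of_forall (fun ℓ hℓ => (hDpos ℓ hℓ).le))
    have hpos : 0 < ∫ ℓ in Ioi (0:ℝ), ((Real.exp (-(y*ℓ)) - 1 + y*ℓ) -
        (Real.exp (-(x*ℓ)) - 1 + x*ℓ)) ∂π := by
      rw [setIntegral_pos_iff_support_of_nonneg_ae hDnn hDint]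
      refine lt_of_lt_of_le (pos_iff_ne_zero.2 hπIoo) (measure_mono ?_)
      intro ℓ hℓ
      have hℓ1 : ℓ ∈ Ioi (0:ℝ) := hℓ.1
      exact ⟨ne_of_gt (hDpos ℓ hℓ1), hℓ1⟩
    have hsub : ∫ ℓ in Ioi (0:ℝ), ((Real.exp (-(y*ℓ)) - 1 + y*ℓ) -
        (Real.exp (-(x*ℓ)) - 1 + x*ℓ)) ∂π =
        (∫ ℓ in Ioi (0:ℝ), (Real.exp (-(y*ℓ)) - 1 + y*ℓ) ∂π) -
        ∫ ℓ in Ioi (0:ℝ), (Real.exp (-(x*ℓ)) - 1 + x*ℓ) ∂π :=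
      integral_sub (hI1 y hy) (hI1 x hx)
    rw [hsub] at hpos
    rw [hψ x hx, hψ y hy]
    nlinarith
  have hφmono : ∀ a b : ℝ, 0 ≤ a → a < b → φ a < φ b := by
    intro a b ha hab
    by_contra h
    push_neg at h
    have := hψmono (φ b) (φ a) (hφnn b (by linarith)) h
    rw [hinv1 a ha, hinv1 b (by linarith)] at this
    linarith
  have hφmono' : ∀ a b : ℝ, 0 ≤ a → a ≤ b → φ a ≤ φ b := by
    intro a b ha hab
    rcases eq_or_lt_of_le hab with rfl | h
    · exact le_rfl
    · exact (hφmono a b ha h).le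
  have hφpos : ∀ l : ℝ, 0 < l → 0 < φ l := by
    intro l hl
    rcases eq_or_lt_of_le (hφnn l hl.le) with h | h
    · exfalso
      have := hinv1 l hl.le
      rw [← h, hψ0] at this; linarith
    · exact h
  have hφtop : Tendsto φ atTop atTop := by
    rw [tendsto_atTop]
    intro M
    filter_upwards [eventually_ge_atTop (ψ (max M 0))] with l hl
    calc M ≤ max M 0 := le_max_left _ _
      _ = φ (ψ (max M 0)) := (hinv2 _ (le_max_right _ _)).symm
      _ ≤ φ l := hφmono' _ _ (hψnn _ (le_max_right _ _)) hl
  have hIs : ∀ l : ℝ, 0 < l →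
      IntegrableOn (fun r => 1 - Real.exp (-(l*r))) (Ioi 0) πs := by
    intro l hl
    by_contra h
    have := hπs l hl
    rw [integral_undef h] at this
    exact absurd this (ne_of_gt (hφpos l hl))
  have htop : πs (Ioi 0) = ⊤ := by
    by_contra h
    have hfin : πs (Ioi (0:ℝ)) < ⊤ := lt_top_iff_ne_top.2 h
    set M := (πs (Ioi (0:ℝ))).toReal with hMdef
    have hM0 : 0 ≤ M := ENNReal.toReal_nonneg
    have hx : (0:ℝ) < M + 1 := by linarith
    have hψx : 0 < ψ (M+1) := by
      have := hψstrict 0 (M+1) le_rfl hx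
      rwa [hψ0] at this
    haveI : IsFiniteMeasure (πs.restrict (Ioi (0:ℝ))) :=
      ⟨by rwa [Measure.restrict_apply_univ]⟩
    have hbound : ‖∫ r in Ioi (0:ℝ), (1 - Real.exp (-(ψ (M+1) * r))) ∂πs‖ ≤
        1 * ((πs.restrict (Ioi (0:ℝ))) univ).toReal := by
      refine norm_integral_le_of_norm_le_const ?_
      refine (ae_restrict_iff' measurableSet_Ioi).2 (Eventually.of_forall ?_)
      intro r hr
      have hr0 : (0:ℝ) < r := hr
      have h1 : Real.exp (-(ψ (M+1) * r)) ≤ 1 := hexp_le_one _ r hψx.le hr0.le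
      have h2 : 0 < Real.exp (-(ψ (M+1) * r)) := Real.exp_pos _
      rw [Real.norm_eq_abs, abs_of_nonneg (by linarith)]
      linarith
    rw [Measure.restrict_apply_univ, one_mul] at hbound
    have hrep := hπs (ψ (M+1)) hψx
    rw [hinv2 (M+1) hx.le] at hrep
    rw [← hrep] at hbound
    rw [Real.norm_eq_abs, abs_of_nonneg (by linarith)] at hbound
    linarith
  have part1 : Tendsto (fun ε : ℝ => πs (Ioi ε)) (𝓝[>] 0) (𝓝 ⊤) := by
    have hmonoS : Monotone (fun n : ℕ => Ioi (1/((n:ℝ)+1))) := by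
      intro n m hnm
      apply Ioi_subset_Ioi
      apply one_div_le_one_div_of_le (by positivity)
      have : (n:ℝ) ≤ m := Nat.cast_le.2 hnm
      linarith
    have hU : (⋃ n : ℕ, Ioi (1/((n:ℝ)+1))) = Ioi (0:ℝ) := by
      ext z
      simp only [mem_iUnion, mem_Ioi]
      constructor
      · rintro ⟨n, hn⟩
        exact lt_trans (by positivity) hn
      · intro hz
        obtain ⟨n, hn⟩ := exists_nat_one_div_lt hz
        exact ⟨n, hn⟩
    have hlim : Tendsto (fun n : ℕ => πs (Ioi (1/((n:ℝ)+1)))) atTop (𝓝 ⊤) := by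
      have := tendsto_measure_iUnion_atTop (μ := πs) hmonoS
      rw [hU, htop] at this
      exact this
    rw [ENNReal.tendsto_nhds_top_iff_nat]
    intro k
    obtain ⟨m, hm⟩ := (ENNReal.tendsto_nhds_top_iff_nat.1 hlim k).exists
    filter_upwards [Ioo_mem_nhdsGT (show (0:ℝ) < 1/((m:ℝ)+1) by positivity)]
      with ε hε
    exact lt_of_lt_of_le hm (measure_mono (Ioi_subset_Ioi hε.2.le))
  refine ⟨part1, ?_⟩
  -- part 2
  have hsuper : ∀ u : ℝ, 0 ≤ u → 2 * ψ u ≤ ψ (2*u) := by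
    intro u hu
    have h1 := hL1 u (2*u) hu (by linarith)
    have h2 := hL2 0 u le_rfl hu
    rw [hψ0] at h2
    nlinarith
  have hψd_posat : ∀ u : ℝ, 0 < u → 0 < ψ u → 0 < ψd u := by
    intro u hu hψu
    have h2 := hL2 0 u le_rfl hu.le
    rw [hψ0] at h2
    nlinarith
  have hFlow : ∀ lam : ℝ, 0 < lam → φ lam / 8 ≤ φ (2*lam) - φ lam := by
    intro lam hlam
    obtain ⟨u, hudef⟩ : ∃ u, u = φ lam := ⟨_, rfl⟩
    obtain ⟨w, hwdef⟩ : ∃ w, w = φ (2*lam) := ⟨_, rfl⟩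
    rw [← hudef, ← hwdef]
    have hu : 0 < u := by rw [hudef]; exact hφpos lam hlam
    have hψu : ψ u = lam := by rw [hudef]; exact hinv1 lam hlam.le
    have hψw : ψ w = 2*lam := by rw [hwdef]; exact hinv1 (2*lam) (by linarith)
    have huw : u ≤ w := by
      rw [hudef, hwdef]; exact hφmono' lam (2*lam) hlam.le (by linarith)
    have hw0 : 0 ≤ w := hu.le.trans huw
    have hψdu : 0 < ψd u := hψd_posat u hu (by rw [hψu]; exact hlam)
    have hw2u : w ≤ 2*u := by
      by_contra hcon
      push_neg at hcon
      have h1 : ψ (2*u) < ψ w := hψstrict (2*u) w (by linarith) hcon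
      have h2 : 2 * ψ u ≤ ψ (2*u) := hsuper u hu.le
      rw [hψu] at h2
      rw [hψw] at h1
      linarith
    have hψdw : ψd w ≤ 2 * ψd u :=
      (hψd_mono w (2*u) hw0 hw2u).trans (hψd_two u hu.le)
    have hstep4 : lam ≤ (w - u) * (2 * ψd u) := by
      have h1 : ψ w - ψ u ≤ (w - u) * ψd w := hL2 u w hu.le huw
      rw [hψu, hψw] at h1
      have h2 : (w - u) * ψd w ≤ (w - u) * (2 * ψd u) :=
        mul_le_mul_of_nonneg_left hψdw (by linarith)
      linarith
    have hstep5 : u * ψd u / 4 ≤ lam := by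
      have h1 : (u - u/2) * ψd (u/2) ≤ ψ u - ψ (u/2) := hL1 (u/2) u (by linarith) (by linarith)
      have h2 : 0 ≤ ψ (u/2) := hψnn (u/2) (by linarith)
      have h3 : ψd u ≤ 2 * ψd (u/2) := by
        have := hψd_two (u/2) (by linarith)
        rw [show 2*(u/2) = u by ring] at this
        exact this
      have h4 : 0 ≤ ψd (u/2) := hψd_nn (u/2) (by linarith)
      rw [hψu] at h1
      nlinarith
    have h7 : u/8 * (2*ψd u) ≤ (w - u) * (2*ψd u) := by
      calc u/8 * (2*ψd u) = u * ψd u / 4 := by ring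
        _ ≤ lam := hstep5
        _ ≤ (w - u) * (2*ψd u) := hstep4
    exact le_of_mul_le_mul_right h7 (by linarith)
  have hFdouble : ∀ lam : ℝ, 0 < lam →
      φ lam - φ (lam/2) ≤ 2 * (φ (2*lam) - φ lam) := by
    intro lam hlam
    obtain ⟨v, hvdef⟩ : ∃ v, v = φ (lam/2) := ⟨_, rfl⟩
    obtain ⟨u, hudef⟩ : ∃ u, u = φ lam := ⟨_, rfl⟩
    obtain ⟨w, hwdef⟩ : ∃ w, w = φ (2*lam) := ⟨_, rfl⟩
    rw [← hvdef, ← hudef, ← hwdef]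
    have hv : 0 < v := by rw [hvdef]; exact hφpos (lam/2) (by linarith)
    have hψv : ψ v = lam/2 := by rw [hvdef]; exact hinv1 (lam/2) (by linarith)
    have hψu : ψ u = lam := by rw [hudef]; exact hinv1 lam hlam.le
    have hψw : ψ w = 2*lam := by rw [hwdef]; exact hinv1 (2*lam) (by linarith)
    have hvu : v ≤ u := by
      rw [hvdef, hudef]; exact hφmono' (lam/2) lam (by linarith) (by linarith)
    have huw : u ≤ w := by
      rw [hudef, hwdef]; exact hφmono' lam (2*lam) hlam.le (by linarith)
    have hw0 : 0 ≤ w := (hv.le.trans hvu).trans huw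
    have hψdv : 0 < ψd v := hψd_posat v hv (by rw [hψv]; linarith)
    have hw4v : w ≤ 2*(2*v) := by
      by_contra hcon
      push_neg at hcon
      have h1 : ψ (2*(2*v)) < ψ w := hψstrict (2*(2*v)) w (by linarith) hcon
      have h2 : 2 * ψ v ≤ ψ (2*v) := hsuper v hv.le
      have h3 : 2 * ψ (2*v) ≤ ψ (2*(2*v)) := hsuper (2*v) (by linarith)
      rw [hψv] at h2
      rw [hψw] at h1
      linarith
    have hψdw : ψd w ≤ 4 * ψd v := by
      have ha := hψd_mono w (2*(2*v)) hw0 hw4v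
      have hb := hψd_two (2*v) (by linarith)
      have hc := hψd_two v hv.le
      linarith
    have hstep1 : (u - v) * ψd v ≤ lam/2 := by
      have h1 : (u - v) * ψd v ≤ ψ u - ψ v := hL1 v u hv.le hvu
      rw [hψu, hψv] at h1
      linarith
    have hstep2 : lam ≤ (w - u) * (4 * ψd v) := by
      have h1 : ψ w - ψ u ≤ (w - u) * ψd w := hL2 u w (hv.le.trans hvu) huw
      rw [hψu, hψw] at h1
      have h2 : (w - u) * ψd w ≤ (w - u) * (4 * ψd v) :=
        mul_le_mul_of_nonneg_left hψdw (by linarith)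
      linarith
    have h7 : (u - v) * ψd v ≤ (2*(w-u)) * ψd v := by
      calc (u - v) * ψd v ≤ lam/2 := hstep1
        _ ≤ (w - u) * (4 * ψd v) / 2 := by linarith
        _ = (2*(w-u)) * ψd v := by ring
    exact le_of_mul_le_mul_right h7 hψdv
  obtain ⟨c₀, hc₀def⟩ : ∃ c : ℝ, c = Real.exp (-2) / (1 - Real.exp (-2)) := ⟨_, rfl⟩
  have hc₀pos : 0 < c₀ := by
    rw [hc₀def]
    apply div_pos (Real.exp_pos _)
    have : Real.exp (-2:ℝ) < 1 := Real.exp_lt_one_iff.2 (by norm_num)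
    linarith
  have hc₀lt : c₀ < 1/2 := by
    have h3 : (3:ℝ) < Real.exp 2 := by
      nlinarith [Real.add_one_lt_exp (show (2:ℝ) ≠ 0 by norm_num)]
    have he : Real.exp (-2:ℝ) * Real.exp 2 = 1 := by
      rw [← Real.exp_add]; norm_num
    have hlt : Real.exp (-2:ℝ) < 1/3 := by
      nlinarith [Real.exp_pos (-2:ℝ)]
    have hd : 0 < 1 - Real.exp (-2:ℝ) := by linarith
    rw [hc₀def, div_lt_iff₀ hd]
    nlinarith
  have hkey : ∀ lam : ℝ, 0 < lam →
      φ (2*lam) - φ lam ≤ lam * (∫ r in Ioo (0:ℝ) (4/lam), r ∂πs)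
        + c₀ * (φ lam - φ (lam/2)) := by
    intro lam hlam
    have hl2 : 0 < lam/2 := by linarith
    have h2l : 0 < 2*lam := by linarith
    have hε : 0 < 4/lam := by positivity
    have hrepF : φ (2*lam) - φ lam = ∫ r in Ioi (0:ℝ),
        ((1 - Real.exp (-(2*lam*r))) - (1 - Real.exp (-(lam*r)))) ∂πs := by
      rw [hπs lam hlam, hπs (2*lam) h2l, ← integral_sub (hIs (2*lam) h2l) (hIs lam hlam)]
    have hrepH : φ lam - φ (lam/2) = ∫ r in Ioi (0:ℝ),
        ((1 - Real.exp (-(lam*r))) - (1 - Real.exp (-(lam/2*r)))) ∂πs := by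
      rw [hπs (lam/2) hl2, hπs lam hlam, ← integral_sub (hIs lam hlam) (hIs (lam/2) hl2)]
    have hJint : IntegrableOn (fun r : ℝ => r) (Ioo 0 (4/lam)) πs := by
      refine Integrable.mono
        (((hIs lam hlam).mono_set Ioo_subset_Ioi_self).const_mul (Real.exp 4 / lam))
        continuous_id.aestronglyMeasurable ?_
      refine (ae_restrict_iff' measurableSet_Ioo).2 (Eventually.of_forall ?_)
      intro r hr
      have hr0 : 0 < r := hr.1
      have h1 : lam * r * Real.exp (-(lam*r)) ≤ 1 - Real.exp (-(lam*r)) := by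
        have := aux_mul_exp (lam*r); linarith
      have h2 : Real.exp (-(4:ℝ)) ≤ Real.exp (-(lam*r)) := by
        apply Real.exp_le_exp.2
        have : lam * r < 4 := by
          have := hr.2
          rw [lt_div_iff₀ hlam] at this
          linarith
        linarith
      have h3 : lam * r * Real.exp (-(4:ℝ)) ≤ 1 - Real.exp (-(lam*r)) := by
        have := mul_le_mul_of_nonneg_left h2 (by positivity : (0:ℝ) ≤ lam * r)
        linarith
      have h4 := mul_le_mul_of_nonneg_left h3 (Real.exp_pos 4).le
      have h5 : Real.exp 4 * Real.exp (-(4:ℝ)) = 1 := by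
        rw [← Real.exp_add]; norm_num
      have h6 : Real.exp 4 * (lam * r * Real.exp (-(4:ℝ))) = lam * r := by
        rw [show Real.exp 4 * (lam*r*Real.exp (-(4:ℝ))) =
          (Real.exp 4 * Real.exp (-(4:ℝ)))*(lam*r) by ring, h5, one_mul]
      have hE1 : Real.exp (-(lam*r)) ≤ 1 := hexp_le_one lam r hlam.le hr0.le
      have hrhs : (0:ℝ) ≤ Real.exp 4 / lam * (1 - Real.exp (-(lam*r))) :=
        mul_nonneg (by positivity) (by linarith)
      rw [Real.norm_eq_abs, Real.norm_eq_abs, abs_of_nonneg hr0.le, abs_of_nonneg hrhs]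
      rw [div_mul_eq_mul_div, le_div_iff₀ hlam]
      nlinarith
    have hG2 : IntegrableOn
        (fun r => (1 - Real.exp (-(lam*r))) - (1 - Real.exp (-(lam/2*r)))) (Ioi 0) πs :=
      (hIs lam hlam).sub (hIs (lam/2) hl2)
    have hIndInt : IntegrableOn ((Ioo (0:ℝ) (4/lam)).indicator (fun r => r)) (Ioi 0) πs :=
      (hJint.integrable_indicator measurableSet_Ioo).integrableOn
    have hmain : ∫ r in Ioi (0:ℝ),
        ((1 - Real.exp (-(2*lam*r))) - (1 - Real.exp (-(lam*r)))) ∂πs ≤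
        ∫ r in Ioi (0:ℝ), (lam * (Ioo (0:ℝ) (4/lam)).indicator (fun r => r) r
          + c₀ * ((1 - Real.exp (-(lam*r))) - (1 - Real.exp (-(lam/2*r))))) ∂πs := by
      refine setIntegral_mono_on ((hIs (2*lam) h2l).sub (hIs lam hlam))
        ((hIndInt.const_mul lam).add (hG2.const_mul c₀)) measurableSet_Ioi ?_
      intro r hr
      have hr0 : (0:ℝ) < r := hr
      have hA : Real.exp (-(lam*r)) = Real.exp (-(lam/2*r))^2 := by
        rw [sq, ← Real.exp_add]; ring_nf
      have hB : Real.exp (-(2*lam*r)) = Real.exp (-(lam*r))^2 := by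
        rw [sq, ← Real.exp_add]; ring_nf
      have hEE : Real.exp (-(lam*r)) ≤ Real.exp (-(lam/2*r)) :=
        Real.exp_le_exp.2 (by nlinarith)
      rcases lt_or_ge r (4/lam) with hcase | hcase
      · rw [indicator_of_mem (show r ∈ Ioo (0:ℝ) (4/lam) from ⟨hr0, hcase⟩)]
        rw [hB]
        nlinarith [sq_nonneg (1 - Real.exp (-(lam*r))),
          aux_one_sub_exp_le (lam*r),
          mul_nonneg hc₀pos.le (sub_nonneg.2 hEE)]
      · rw [indicator_of_notMem
          (show r ∉ Ioo (0:ℝ) (4/lam) by intro hmem; exact absurd hmem.2 (not_lt.2 hcase))]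
        have hEle : Real.exp (-(lam/2*r)) ≤ Real.exp (-2:ℝ) := by
          apply Real.exp_le_exp.2
          have h4r : 4 ≤ lam * r := by
            rw [div_le_iff₀ hlam] at hcase
            linarith
          linarith
        have ha1 : Real.exp (-2:ℝ) < 1 := Real.exp_lt_one_iff.2 (by norm_num)
        have htail := aux_tail (Real.exp_pos (-(lam/2*r))) hEle ha1
        rw [hB, hA, hc₀def]
        nlinarith [htail]
    rw [hrepF]
    have hsplit : ∫ r in Ioi (0:ℝ), (lam * (Ioo (0:ℝ) (4/lam)).indicator (fun r => r) r
        + c₀ * ((1 - Real.exp (-(lam*r))) - (1 - Real.exp (-(lam/2*r))))) ∂πs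
        = lam * (∫ r in Ioo (0:ℝ) (4/lam), r ∂πs) + c₀ * (φ lam - φ (lam/2)) := by
      rw [integral_add (hIndInt.const_mul lam) (hG2.const_mul c₀),
        integral_const_mul, integral_const_mul,
        setIntegral_indicator measurableSet_Ioo,
        inter_eq_self_of_subset_right (fun x hx => hx.1), ← hrepH]
    rw [← hsplit]
    exact hmain
  -- conclude part 2
  have hC : 0 < 1 - 2*c₀ := by linarith
  rw [tendsto_atTop]
  intro M
  obtain ⟨X, hX⟩ := eventually_atTop.1 (tendsto_atTop.1 hφtop (32*M/(1-2*c₀)))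
  have hX'pos : (0:ℝ) < max X 1 := lt_of_lt_of_le one_pos (le_max_right X 1)
  filter_upwards [Ioo_mem_nhdsGT
    (show (0:ℝ) < 4/(max X 1) by positivity)] with ε hε
  have hε0 : (0:ℝ) < ε := hε.1
  have hlam : (0:ℝ) < 4/ε := by positivity
  have hlamX : X ≤ 4/ε := by
    have h2 : ε * max X 1 < 4 := by
      have h3 := hε.2
      rw [lt_div_iff₀ hX'pos] at h3
      exact h3
    have h1 : max X 1 ≤ 4/ε := by
      rw [le_div_iff₀ hε0]
      nlinarith
    linarith [le_max_left X 1]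
  have hk := hkey (4/ε) hlam
  have hFd := hFdouble (4/ε) hlam
  have hFl := hFlow (4/ε) hlam
  have hφbig : 32*M/(1-2*c₀) ≤ φ (4/ε) := hX _ hlamX
  have h44 : (4:ℝ)/(4/ε) = ε := by field_simp
  rw [h44] at hk
  have e1 : 32*M ≤ (1-2*c₀) * φ (4/ε) := by
    have h5 := mul_le_mul_of_nonneg_left hφbig hC.le
    have h6 : (1-2*c₀) * (32*M/(1-2*c₀)) = 32*M := by field_simp
    linarith
  have hJ : 4*M ≤ (4/ε) * ∫ r in Ioo (0:ℝ) ε, r ∂πs := by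
    nlinarith [mul_le_mul_of_nonneg_left hFd hc₀pos.le,
      mul_le_mul_of_nonneg_left hFl hC.le]
  have hfin : (1/ε) * (∫ r in Ioo (0:ℝ) ε, r ∂πs) =
      ((4/ε) * ∫ r in Ioo (0:ℝ) ε, r ∂πs)/4 := by ring
  rw [hfin]
  linarith
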